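/- arXiv:2509.11349 — 2 statements merged into one kernel-verified Lean document; each statement's English description precedes it below -/
import Mathlib

section
/- For any n ≥ 1, the map sending a nonassociative noncommutative monomial m (an element of the free magma on Fin n) of degree d' to the list of pairs ((σ_m(1), l^m_1), (σ_m(2), l^m_2), …, (σ_m(d'), l^m_{d'})) is injective: if m ≠ m' are two elements of the free magma on Fin n, then their associated lists of (leaf label, leaf level) pairs are distinct. -/
noncomputable section

open scoped BigOperators

namespace NAPIT

/-- The list of (leaf label, leaf level) pairs of a nonassociative monomial (element of the
free magma), in left-to-right order, where the root of the monomial is at level `s`. -/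
def leafData {n : ℕ} : FreeMagma (Fin n) → ℕ → List (Fin n × ℕ)
  | FreeMagma.of i, s => [(i, s)]
  | FreeMagma.mul x y, s => leafData x (s + 1) ++ leafData y (s + 1)

/-- The degree (number of leaves) of a nonassociative monomial. -/
def degM {n : ℕ} : FreeMagma (Fin n) → ℕ
  | FreeMagma.of _ => 1
  | FreeMagma.mul x y => degM x + degM y

/-- The depth of a nonassociative monomial (root at level 1; the depth is the maximal level
of a leaf). -/
def depthM {n : ℕ} : FreeMagma (Fin n) → ℕ
  | FreeMagma.of _ => 1
  | FreeMagma.mul x y => max (depthM x) (depthM y) + 1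

/-- Evaluation of a nonassociative monomial at `b : Fin n → A`, using `mul` as the product on
`A`; this is the unique magma homomorphism `FreeMagma (Fin n) → (A, mul)` with `x_i ↦ b i`. -/
def evalWith {n : ℕ} {A : Type*} (mul : A → A → A) (b : Fin n → A) : FreeMagma (Fin n) → A
  | FreeMagma.of i => b i
  | FreeMagma.mul x y => mul (evalWith mul b x) (evalWith mul b y)

/-- The multiset of all variants `m_ε` of a monomial `m`, where `ε` ranges over all choices of
a Boolean for each internal node of `m`, and `m_ε` is obtained from `m` by swapping the two
children at exactly those internal nodes where `ε` is true (counted with multiplicity). -/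
def variants {n : ℕ} : FreeMagma (Fin n) → Multiset (FreeMagma (Fin n))
  | FreeMagma.of i => {FreeMagma.of i}
  | FreeMagma.mul x y =>
      (variants x).bind fun x' => (variants y).bind fun y' =>
        {FreeMagma.mul x' y', FreeMagma.mul y' x'}

/-- The underlying module of the algebra `A'_d(R)`: arrays `x[i,j,k]` with
`i, j ∈ Fin (d+1)`, `k ∈ Fin d` (zero-based; the paper's indices are shifted by one). -/
def Arr (d : ℕ) (R : Type*) : Type _ := Fin (d + 1) → Fin (d + 1) → Fin d → R

namespace Arr

variable {d : ℕ} {R : Type*}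

instance instAddCommGroup [AddCommGroup R] : AddCommGroup (Arr d R) :=
  inferInstanceAs (AddCommGroup (Fin (d + 1) → Fin (d + 1) → Fin d → R))

instance instModule {S : Type*} [Semiring S] [AddCommGroup R] [Module S R] :
    Module S (Arr d R) :=
  inferInstanceAs (Module S (Fin (d + 1) → Fin (d + 1) → Fin d → R))

/-- The bilinear product `∘` of `A'_d(R)`:
`(x ∘ y)[i,j,k] = ∑_{l} x[i,l,k+1] * y[l,j,k+1]` if `k+1` is a legal third index, else `0`. -/
def aprod [CommRing R] (x y : Arr d R) : Arr d R := fun i j k =>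
  if h : (k : ℕ) + 1 < d then
    ∑ l : Fin (d + 1), x i l ⟨(k : ℕ) + 1, h⟩ * y l j ⟨(k : ℕ) + 1, h⟩
  else 0

instance instMul [CommRing R] : Mul (Arr d R) := ⟨aprod⟩

end Arr

/-- The algebra `C'_d(R)`: same underlying module as `A'_d(R)`, with the anticommutator
product `a ⊙ b = a ∘ b + b ∘ a`. -/
def CArr (d : ℕ) (R : Type*) : Type _ := Arr d R

namespace CArr

variable {d : ℕ} {R : Type*}

/-- The identity map `A'_d(R) → C'_d(R)` of underlying modules. -/
def ofArr (x : Arr d R) : CArr d R := x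

/-- The identity map `C'_d(R) → A'_d(R)` of underlying modules. -/
def toArr (x : CArr d R) : Arr d R := x

instance instAddCommGroup [AddCommGroup R] : AddCommGroup (CArr d R) :=
  inferInstanceAs (AddCommGroup (Arr d R))

instance instModule {S : Type*} [Semiring S] [AddCommGroup R] [Module S R] :
    Module S (CArr d R) :=
  inferInstanceAs (Module S (Arr d R))

instance instMul [CommRing R] : Mul (CArr d R) :=
  ⟨fun a b => ofArr (toArr a * toArr b + toArr b * toArr a)⟩

end CArr

/-- The element `Z_i ∈ A'_d(R)`, `R = MvPolynomial (Fin n × Fin d × Fin d) F`, whose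
`(j, j+1, k)` entry is the indeterminate `z_{i,j,k}` and whose other entries vanish. -/
def Z (F : Type*) [CommRing F] (n d : ℕ) (i : Fin n) :
    Arr d (MvPolynomial (Fin n × Fin d × Fin d) F) := fun j j' k =>
  if h : (j : ℕ) < d ∧ (j' : ℕ) = (j : ℕ) + 1 then
    MvPolynomial.X (i, ⟨(j : ℕ), h.1⟩, k)
  else 0

/-- The element `Z_i` regarded as an element of `C'_d(R)`. -/
def ZC (F : Type*) [CommRing F] (n d : ℕ) (i : Fin n) :
    CArr d (MvPolynomial (Fin n × Fin d × Fin d) F) := CArr.ofArr (Z F n d i)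

/-- The monomial `∏_{t=1}^{d'} z_{σ_m(t), (t-1) + k1, (l^m_t - 1) + k2}` associated to a
nonassociative monomial `m` of degree `d'` and offsets `k1, k2` (all indices zero-based; the
paper's 1-based offsets are `k1 + 1`, `k2 + 1`).  Indices which would fall out of range are
discarded (this never happens in the intended range of parameters). -/
def monProd (F : Type*) [CommRing F] {n : ℕ} (d : ℕ) (k1 k2 : ℕ) (m : FreeMagma (Fin n)) :
    MvPolynomial (Fin n × Fin d × Fin d) F :=
  (((leafData m 1).zipIdx.map Prod.swap).map fun p =>
    if h : p.1 + k1 < d ∧ p.2.2 - 1 + k2 < d then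
      MvPolynomial.X (p.2.1, ⟨p.1 + k1, h.1⟩, ⟨p.2.2 - 1 + k2, h.2⟩)
    else 0).prod

/-- `ψ(m) = ∑_ε ∏_{t=1}^{d'} z_{σ_{m_ε}(t), t, l^{m_ε}_t}` (1-based), the sum running over all
choices `ε` of a Boolean for each internal node of `m`. -/
def psi (F : Type*) [CommRing F] {n : ℕ} (d : ℕ) (m : FreeMagma (Fin n)) :
    MvPolynomial (Fin n × Fin d × Fin d) F :=
  ((variants m).map fun m' => monProd F d 0 0 m').sum

/-- The coefficient function of an element of the free nonunital nonassociative algebra. -/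
def coeffOf {F : Type*} [Semiring F] {n : ℕ}
    (f : FreeNonUnitalNonAssocAlgebra F (Fin n)) : FreeMagma (Fin n) →₀ F := f.coeff

/-- Evaluation of an element of the free nonunital nonassociative algebra on `x_1, …, x_n` at
the tuple `b`, with `mul` as the product of the target: the linear extension of
`m ↦ evalWith mul b m`, i.e. the unique nonunital `F`-algebra homomorphism sending
`x_i ↦ b i` into `(A, mul)`. -/
def evalNAWith {F : Type*} [Semiring F] {n : ℕ} {A : Type*}
    [AddCommMonoid A] [Module F A] (mul : A → A → A) (b : Fin n → A)
    (f : FreeNonUnitalNonAssocAlgebra F (Fin n)) : A :=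
  Finsupp.sum (coeffOf f) fun m c => c • evalWith mul b m

/-- Evaluation of an element of the free nonunital nonassociative algebra at a tuple `b` of
elements of a (not necessarily unital/associative) algebra `A`: the unique nonunital
`F`-algebra homomorphism sending `x_i ↦ b i`. -/
def evalNA {F : Type*} [Semiring F] {n : ℕ} {A : Type*}
    [AddCommMonoid A] [Mul A] [Module F A] (b : Fin n → A)
    (f : FreeNonUnitalNonAssocAlgebra F (Fin n)) : A :=
  evalNAWith (· * ·) b f

/-- Evaluation of an element of the unitization of the free nonunital nonassociative algebra
at a tuple `b` of elements of the unitization of `A`: the unique unital `F`-algebra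
homomorphism sending `x_i ↦ b i` (and the adjoined unit to the unit). -/
def evalUnit {F : Type*} [CommSemiring F] {n : ℕ} {A : Type*}
    [AddCommMonoid A] [Mul A] [Module F A] (b : Fin n → Unitization F A)
    (f : Unitization F (FreeNonUnitalNonAssocAlgebra F (Fin n))) : Unitization F A :=
  Unitization.inl f.fst + evalNA b f.snd

/-- The commutativity congruence on the free magma: the smallest equivalence relation with
`m₁ * m₂ ≈ m₂ * m₁` and compatible with the product. -/
inductive CommEq {n : ℕ} : FreeMagma (Fin n) → FreeMagma (Fin n) → Prop
  | refl (m : FreeMagma (Fin n)) : CommEq m m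
  | symm {a b : FreeMagma (Fin n)} : CommEq a b → CommEq b a
  | trans {a b c : FreeMagma (Fin n)} : CommEq a b → CommEq b c → CommEq a c
  | comm (a b : FreeMagma (Fin n)) : CommEq (a * b) (b * a)
  | mul_congr {a a' b b' : FreeMagma (Fin n)} :
      CommEq a a' → CommEq b b' → CommEq (a * b) (a' * b')

/-- The basis monomial `m` of the free nonunital nonassociative algebra. -/
def single1 (F : Type*) [Semiring F] {n : ℕ} (m : FreeMagma (Fin n)) :
    FreeNonUnitalNonAssocAlgebra F (Fin n) :=
  MonoidAlgebra.ofCoeff (Finsupp.single m 1 : FreeMagma (Fin n) →₀ F)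

/-- `I_comm`: the `F`-linear span of `{m − m' : m ≈ m'}` inside the free nonunital
nonassociative algebra. -/
def Icomm (F : Type*) [Field F] (n : ℕ) :
    Submodule F (FreeNonUnitalNonAssocAlgebra F (Fin n)) :=
  Submodule.span F
    {x | ∃ m m' : FreeMagma (Fin n), CommEq m m' ∧ x = single1 F m - single1 F m'}

lemma leafData_of' {n : ℕ} (i : Fin n) (s : ℕ) : leafData (FreeMagma.of i) s = [(i, s)] := rfl

lemma leafData_mul' {n : ℕ} (x y : FreeMagma (Fin n)) (s : ℕ) :
    leafData (x * y) s = leafData x (s + 1) ++ leafData y (s + 1) := rfl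

lemma leafData_mulc {n : ℕ} (x y : FreeMagma (Fin n)) (s : ℕ) :
    leafData (FreeMagma.mul x y) s = leafData x (s + 1) ++ leafData y (s + 1) := rfl

lemma leafData_length_pos {n : ℕ} (m : FreeMagma (Fin n)) :
    ∀ s : ℕ, 0 < (leafData m s).length := by
  induction m with
  | ih1 i => intro s; simp [leafData_of']
  | ih2 x y ihx ihy =>
      intro s
      simp only [leafData_mul', List.length_append]
      have := ihx (s + 1); omega

lemma leafData_sumW {n : ℕ} (m : FreeMagma (Fin n)) :
    ∀ s : ℕ, ((leafData m s).map fun p => ((1:ℚ)/2) ^ p.2).sum = ((1:ℚ)/2) ^ s := by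
  induction m with
  | ih1 i => intro s; simp [leafData_of']
  | ih2 x y ihx ihy =>
      intro s
      simp only [leafData_mul', List.map_append, List.sum_append, ihx, ihy]
      rw [pow_succ]
      ring

lemma take_sum_inj (L : List ℚ) (hL : ∀ x ∈ L, 0 < x) :
    ∀ i j, i ≤ L.length → j ≤ L.length →
      (L.take i).sum = (L.take j).sum → i = j := by
  have key : ∀ i j, i < j → j ≤ L.length → (L.take i).sum < (L.take j).sum := by
    intro i j hij hj
    have hsplit : L.take j = L.take i ++ (L.drop i).take (j - i) := by
      rw [← List.take_add]; congr 1; omega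
    rw [hsplit, List.sum_append]
    have hne : (L.drop i).take (j - i) ≠ [] := by
      apply List.ne_nil_of_length_pos
      rw [List.length_take, List.length_drop]
      omega
    have hpos : 0 < ((L.drop i).take (j - i)).sum := by
      apply List.sum_pos
      · intro x hx
        exact hL x (List.mem_of_mem_drop (List.mem_of_mem_take hx))
      · exact hne
    linarith
  intro i j hi hj hsum
  rcases lt_trichotomy i j with h | h | h
  · exact absurd hsum (ne_of_lt (key i j h hj))
  · exact h
  · exact absurd hsum.symm (ne_of_lt (key j i h hi))

lemma leafData_inj_aux {n : ℕ} (m : FreeMagma (Fin n)) :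
    ∀ (m' : FreeMagma (Fin n)) (s : ℕ), leafData m s = leafData m' s → m = m' := by
  induction m with
  | ih1 i =>
      intro m' s h
      cases m' with
      | of j => simp [leafData_of', Prod.ext_iff] at h; rw [h]
      | mul x' y' =>
          exfalso
          have := congrArg List.length h
          simp only [leafData_of', leafData_mul', leafData_mulc, List.length_append, List.length_singleton] at this
          have h1 := leafData_length_pos x' (s + 1)
          have h2 := leafData_length_pos y' (s + 1)
          omega
  | ih2 x y ihx ihy =>
      intro m' s h
      cases m' with
      | of j =>
          exfalso
          have := congrArg List.length h
          simp only [leafData_of', leafData_mul', leafData_mulc, List.length_append, List.length_singleton] at this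
          have h1 := leafData_length_pos x (s + 1)
          have h2 := leafData_length_pos y (s + 1)
          omega
      | mul x' y' =>
          simp only [leafData_mul', leafData_mulc] at h
          set a := leafData x (s + 1) with ha
          set b := leafData y (s + 1) with hb
          set a' := leafData x' (s + 1) with ha'
          set b' := leafData y' (s + 1) with hb'
          set w : Fin n × ℕ → ℚ := fun p => ((1:ℚ)/2) ^ p.2 with hw
          have hlen : a.length = a'.length := by
            have hLpos : ∀ z ∈ (a ++ b).map w, 0 < z := by
              intro z hz
              rcases List.mem_map.1 hz with ⟨p, _, rfl⟩
              positivity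
            have ht1 : ((a ++ b).map w).take a.length = a.map w := by
              rw [← List.map_take, List.take_left]
            have ht2 : ((a ++ b).map w).take a'.length = a'.map w := by
              rw [h, ← List.map_take, List.take_left]
            apply take_sum_inj ((a ++ b).map w) hLpos
            · rw [List.length_map, List.length_append]; omega
            · rw [List.length_map, h, List.length_append]; omega
            · rw [ht1, ht2, ha, ha', hw]
              rw [leafData_sumW x (s + 1), leafData_sumW x' (s + 1)]
          obtain ⟨hxa, hyb⟩ := List.append_inj h hlen
          rw [ihx x' (s + 1) hxa, ihy y' (s + 1) hyb]
          rfl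

/-- For any `n ≥ 1`, the map sending a nonassociative noncommutative
monomial `m` (an element of the free magma on `Fin n`) to the list of its
(leaf label, leaf level) pairs `((σ_m(1), l^m_1), …, (σ_m(d'), l^m_{d'}))`, in left-to-right
order with the root at level `1`, is injective. -/
theorem leafData_injective (n : ℕ) (hn : 1 ≤ n) :
    Function.Injective (fun m : FreeMagma (Fin n) => leafData m 1) := by
  intro m m' h
  exact leafData_inj_aux m m' 1 h


end NAPIT
end
end

section
/- Let R be a commutative ring, let A be a (possibly nonassociative, nonunital) R-algebra with product ·, and define the anticommutator product a ⊙ b := a·b + b·a on A. Then for every n ≥ 1, every element m of the free magma on Fin n, and every assignment b : Fin n → A, the ⊙-evaluation of m at b equals the sum, over all choices ε of a Boolean for each internal node of m, of the ·-evaluation of m_ε at b. In particular, the ⊙-evaluation of a monomial of degree d' is a sum of 2^{d'−1} ·-evaluations (counted with multiplicity). -/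
noncomputable section

open scoped BigOperators

namespace NAPIT

lemma one_le_degM {n : ℕ} (m : FreeMagma (Fin n)) : 1 ≤ degM m := by
  induction m with
  | ih1 i => simp [degM]
  | ih2 a c iha ihc => show 1 ≤ degM a + degM c; omega

/-- Let `R` be a commutative ring and `A` a (possibly nonassociative,
nonunital) `R`-algebra with product `·`; let `a ⊙ b := a·b + b·a` be the anticommutator
product.  For every `n ≥ 1`, every monomial `m` (element of the free magma on `Fin n`) and
every `b : Fin n → A`, the `⊙`-evaluation of `m` at `b` equals the sum, over all choices `ε`
of a Boolean for each internal node of `m`, of the `·`-evaluation of the variant `m_ε` at `b`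
(the `m_ε`, counted with multiplicity, form the multiset `variants m`).  In particular the
`⊙`-evaluation of a monomial of degree `d'` is a sum of `2^{d'-1}` `·`-evaluations. -/
theorem anticommutator_eval_eq_sum_variants {R : Type*} [CommRing R] {A : Type*}
    [NonUnitalNonAssocRing A] [Module R A] [SMulCommClass R A A] [IsScalarTower R A A]
    (n : ℕ) (hn : 1 ≤ n) (m : FreeMagma (Fin n)) (b : Fin n → A) :
    evalWith (fun x y => x * y + y * x) b m
        = ((variants m).map (evalWith (fun x y => x * y) b)).sum ∧
    Multiset.card (variants m) = 2 ^ (degM m - 1) := by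
  induction m with
  | ih1 i => simp [variants, evalWith, degM]
  | ih2 x y ihx ihy =>
    obtain ⟨hx, hcx⟩ := ihx
    obtain ⟨hy, hcy⟩ := ihy
    constructor
    · rw [show evalWith (fun x y => x * y + y * x) b (x * y)
            = evalWith (fun x y => x * y + y * x) b x * evalWith (fun x y => x * y + y * x) b y
              + evalWith (fun x y => x * y + y * x) b y * evalWith (fun x y => x * y + y * x) b x
          from rfl]
      rw [hx, hy]
      rw [show variants (x * y)
            = (variants x).bind fun x' => (variants y).bind fun y' =>
                {FreeMagma.mul x' y', FreeMagma.mul y' x'} from rfl]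
      rw [Multiset.map_bind, Multiset.sum_bind]
      have key : ∀ x' ∈ variants x,
          (Multiset.map (evalWith (fun x y : A => x * y) b)
              ((variants y).bind fun y' =>
                ({FreeMagma.mul x' y', FreeMagma.mul y' x'} : Multiset (FreeMagma (Fin n))))).sum
            = evalWith (fun x y : A => x * y) b x'
                * (Multiset.map (evalWith (fun x y : A => x * y) b) (variants y)).sum
              + (Multiset.map (evalWith (fun x y : A => x * y) b) (variants y)).sum
                * evalWith (fun x y : A => x * y) b x' := by
        intro x' _
        rw [Multiset.map_bind, Multiset.sum_bind]
        have h1 : ∀ y' ∈ variants y,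
            (Multiset.map (evalWith (fun x y : A => x * y) b)
                ({FreeMagma.mul x' y', FreeMagma.mul y' x'} : Multiset (FreeMagma (Fin n)))).sum
              = evalWith (fun x y : A => x * y) b x' * evalWith (fun x y : A => x * y) b y'
                + evalWith (fun x y : A => x * y) b y' * evalWith (fun x y : A => x * y) b x' := by
          intro y' _
          simp [evalWith]
        rw [Multiset.map_congr rfl h1, Multiset.sum_map_add, Multiset.sum_map_mul_left,
          Multiset.sum_map_mul_right]
      rw [Multiset.map_congr rfl key, Multiset.sum_map_add, Multiset.sum_map_mul_right,
        Multiset.sum_map_mul_left]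
    · rw [show variants (x * y)
            = (variants x).bind fun x' => (variants y).bind fun y' =>
                {FreeMagma.mul x' y', FreeMagma.mul y' x'} from rfl]
      rw [Multiset.card_bind]
      simp only [Function.comp_def]
      have inner : ∀ x' ∈ variants x,
          Multiset.card ((variants y).bind fun y' =>
              ({FreeMagma.mul x' y', FreeMagma.mul y' x'} : Multiset (FreeMagma (Fin n))))
            = 2 * 2 ^ (degM y - 1) := by
        intro x' _
        rw [Multiset.card_bind]
        simp only [Function.comp_def]
        have h2 : (fun y' => Multiset.card
            ({FreeMagma.mul x' y', FreeMagma.mul y' x'} : Multiset (FreeMagma (Fin n))))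
            = fun _ => 2 := by funext y'; rfl
        rw [h2, Multiset.map_const', Multiset.sum_replicate, smul_eq_mul, hcy, mul_comm]
      rw [Multiset.map_congr rfl inner, Multiset.map_const', Multiset.sum_replicate,
        smul_eq_mul, hcx]
      have hdx : 1 ≤ degM x := one_le_degM x
      have hdy : 1 ≤ degM y := one_le_degM y
      rw [show degM (x * y) = degM x + degM y from rfl]
      rw [show degM x + degM y - 1 = (degM x - 1) + (degM y - 1) + 1 by omega]
      ring

end NAPIT
end
end
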